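/- Let G be a graph, S = {x,y,z} ⊆ V(G), and 𝒯 a set of internally disjoint S-paths each of which has exactly one vertex of S as an internal vertex. If every edge of G joining two vertices of S could be added to extend some path of 𝒯, then under a maximality assumption on |E(𝒯) ∩ E(G[S])|, every edge of the induced subgraph G[{x,y,z}] belongs to E(𝒯). -/

import Mathlib

open SimpleGraph

/-- A Steiner `S`-path in `G`: a path whose vertex set contains `S`. -/
structure SteinerPath {V : Type*} (G : SimpleGraph V) (S : Set V) where
  first : V
  last : V
  walk : G.Walk first last
  isPath : walk.IsPath
  contains : ∀ s ∈ S, s ∈ walk.support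

/-- A family of internally disjoint `S`-paths: any two intersect exactly in `S`
and share no edges. -/
def IDFamily {V : Type*} (G : SimpleGraph V) (S : Set V) {t : ℕ}
    (P : Fin t → SteinerPath G S) : Prop :=
  ∀ i j, i ≠ j →
    ({v | v ∈ (P i).walk.support} ∩ {v | v ∈ (P j).walk.support} = S) ∧
    (∀ e ∈ (P i).walk.edges, e ∉ (P j).walk.edges)

/-- The maximum number of internally disjoint `S`-paths in `G`. -/
noncomputable def steinerPathNumber {V : Type*} (G : SimpleGraph V) (S : Set V) : ℕ :=
  sSup {t | ∃ P : Fin t → SteinerPath G S, IDFamily G S P}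

/-- The `r`-path connectivity of `G`. -/
noncomputable def pathConnectivity {V : Type*} (G : SimpleGraph V) (r : ℕ) : ℕ :=
  sInf {m | ∃ S : Finset V, S.card = r ∧ steinerPathNumber G (↑S) = m}

/-- `v` is an internal vertex of the Steiner path `P`. -/
def SteinerPath.Internal {V : Type*} {G : SimpleGraph V} {S : Set V}
    (P : SteinerPath G S) (v : V) : Prop :=
  v ∈ P.walk.support ∧ v ≠ P.first ∧ v ≠ P.last

/-- The set of edges of the family `P` joining two vertices of `S`. -/
def familySEdges {V : Type*} {G : SimpleGraph V} {S : Set V} {t : ℕ}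
    (P : Fin t → SteinerPath G S) : Set (Sym2 V) :=
  {e | (∃ i, e ∈ (P i).walk.edges) ∧ ∀ v ∈ e, v ∈ S}
lemma helper_memConcat {α : Type*} {x b : α} {l : List α} :
    x ∈ l.concat b ↔ x ∈ l ∨ x = b := by
  simp [List.concat_eq_append]

lemma helper_takeDrop {V : Type*} [DecidableEq V] {G : SimpleGraph V} {v w u : V}
    {p : G.Walk v w} (hp : p.IsPath) (h : u ∈ p.support) {x : V}
    (hx1 : x ∈ (p.takeUntil u h).support) (hx2 : x ∈ (p.dropUntil u h).support) : x = u := by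
  by_contra hxu
  have hspec := p.take_spec h
  have hnd : p.support.Nodup := hp.support_nodup
  rw [← hspec, Walk.support_append] at hnd
  have hx2' : x ∈ (p.dropUntil u h).support.tail := by
    have := (p.dropUntil u h).support_eq_cons
    rw [this] at hx2
    rcases List.mem_cons.1 hx2 with h' | h'
    · exact absurd h' hxu
    · exact h'
  exact (List.disjoint_of_nodup_append hnd) hx1 hx2'

lemma helper_concat_isPath {V : Type*} {G : SimpleGraph V} {u v w : V}
    {p : G.Walk u v} (hp : p.IsPath) (h : G.Adj v w) (hw : w ∉ p.support) :
    (p.concat h).IsPath := by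
  have : (Walk.cons h.symm p.reverse).IsPath := by
    apply (hp.reverse).cons
    rwa [Walk.support_reverse, List.mem_reverse]
  have h2 : (Walk.cons h.symm p.reverse).reverse.IsPath := this.reverse
  rwa [Walk.reverse_cons, Walk.reverse_reverse] at h2

lemma helper_replace {V : Type*} {G : SimpleGraph V} {S : Set V} {a b c : V}
    (hab : a ≠ b) (hac : a ≠ c) (hbc : b ≠ c) (hS : S = {a, b, c})
    {t : ℕ} (P : Fin t → SteinerPath G S)
    (hP : IDFamily G S P)
    (hone : ∀ i, ∃! s, s ∈ S ∧ (P i).Internal s)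
    (hmax : ∀ Q : Fin t → SteinerPath G S,
      IDFamily G S Q →
      (∀ i, ∃! s, s ∈ S ∧ (Q i).Internal s) →
      (familySEdges Q).ncard ≤ (familySEdges P).ncard)
    (k : Fin t) (hadj : G.Adj a b)
    (hnab : ∀ i, s(a, b) ∉ (P i).walk.edges)
    (q : G.Walk c a) (hq : q.IsPath) (hbq : b ∉ q.support)
    (hsup : ∀ v ∈ q.support, v ∈ (P k).walk.support)
    (hedges : ∀ e ∈ q.edges, e ∈ (P k).walk.edges)
    (hkeep : ∀ e ∈ (P k).walk.edges, (∀ v ∈ e, v ∈ S) → e ∈ q.edges) : False := by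
  classical
  set R : SteinerPath G S :=
    ⟨c, b, q.concat hadj, helper_concat_isPath hq hadj hbq, by
      intro s hs
      rw [Walk.support_concat, List.mem_append, List.mem_singleton]
      rw [hS] at hs
      rcases hs with rfl | rfl | rfl
      · exact Or.inl q.end_mem_support
      · exact Or.inr rfl
      · exact Or.inl q.start_mem_support⟩ with hR
  have hRsup : ∀ v ∈ R.walk.support, v ∈ (P k).walk.support ∨ v ∈ S := by
    intro v hv
    rw [hR] at hv
    simp only [Walk.support_concat, List.mem_append, List.mem_singleton] at hv
    rcases hv with hv | rfl
    · exact Or.inl (hsup v hv)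
    · exact Or.inr (by rw [hS]; right; left; rfl)
  have hRedge : ∀ e ∈ R.walk.edges, e ∈ (P k).walk.edges ∨ e = s(a, b) := by
    intro e he
    rw [hR] at he
    simp only [Walk.edges_concat, helper_memConcat] at he
    rcases he with he | rfl
    · exact Or.inl (hedges e he)
    · exact Or.inr rfl
  have hSR : ∀ s ∈ S, s ∈ R.walk.support := R.contains
  set Q : Fin t → SteinerPath G S := Function.update P k R with hQ
  have hQk : Q k = R := Function.update_self k R P
  have hQne : ∀ i, i ≠ k → Q i = P i := fun i hi => Function.update_of_ne hi R P
  -- IDFamily for Q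
  have hQID : IDFamily G S Q := by
    intro i j hij
    by_cases hi : i = k
    · subst hi
      have hj : j ≠ i := fun h => hij h.symm
      rw [hQk, hQne j hj]
      constructor
      · ext v
        simp only [Set.mem_inter_iff, Set.mem_setOf_eq]
        constructor
        · rintro ⟨hv1, hv2⟩
          rcases hRsup v hv1 with hv1' | hv1'
          · have := (hP i j hij).1
            rw [← this]
            exact ⟨hv1', hv2⟩
          · exact hv1'
        · intro hv
          exact ⟨hSR v hv, (P j).contains v hv⟩
      · intro e he hej
        rcases hRedge e he with he' | rfl
        · exact (hP i j hij).2 e he' hej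
        · exact hnab j hej
    · rw [hQne i hi]
      by_cases hj : j = k
      · subst hj
        rw [hQk]
        constructor
        · ext v
          simp only [Set.mem_inter_iff, Set.mem_setOf_eq]
          constructor
          · rintro ⟨hv2, hv1⟩
            rcases hRsup v hv1 with hv1' | hv1'
            · have := (hP i j hij).1
              rw [← this]
              exact ⟨hv2, hv1'⟩
            · exact hv1'
          · intro hv
            exact ⟨(P i).contains v hv, hSR v hv⟩
        · intro e he hej
          rcases hRedge e hej with he' | rfl
          · exact (hP i j hij).2 e he he'
          · exact hnab i he
      · rw [hQne j hj]
        exact hP i j hij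
  -- uniqueness of internal vertices
  have hQone : ∀ i, ∃! s, s ∈ S ∧ (Q i).Internal s := by
    intro i
    by_cases hi : i = k
    · subst hi
      rw [hQk]
      refine ⟨a, ⟨by rw [hS]; left; rfl, ?_, hac, hab⟩, ?_⟩
      · rw [hR]
        show a ∈ (q.concat hadj).support
        rw [Walk.support_concat, List.mem_append, List.mem_singleton]
        exact Or.inl q.end_mem_support
      · rintro s ⟨hsS, _, hsf, hsl⟩
        rw [hS] at hsS
        rcases hsS with rfl | rfl | rfl
        · rfl
        · exact absurd rfl hsl
        · exact absurd rfl hsf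
    · rw [hQne i hi]
      exact hone i
  -- counting
  have hsub : familySEdges P ⊆ familySEdges Q := by
    rintro e ⟨⟨i, hei⟩, hv⟩
    by_cases hi : i = k
    · refine ⟨⟨k, ?_⟩, hv⟩
      rw [hQk, hR]
      show e ∈ (q.concat hadj).edges
      rw [Walk.edges_concat, helper_memConcat]
      exact Or.inl (hkeep e (hi ▸ hei) hv)
    · exact ⟨⟨i, by rwa [hQne i hi]⟩, hv⟩
  have habQ : s(a, b) ∈ familySEdges Q := by
    refine ⟨⟨k, ?_⟩, ?_⟩
    · rw [hQk, hR]
      show s(a, b) ∈ (q.concat hadj).edges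
      rw [Walk.edges_concat, helper_memConcat]
      exact Or.inr rfl
    · intro v hv
      rw [Sym2.mem_iff] at hv
      rw [hS]
      rcases hv with rfl | rfl
      · left; rfl
      · right; left; rfl
  have habP : s(a, b) ∉ familySEdges P := by
    rintro ⟨⟨i, hi⟩, -⟩
    exact hnab i hi
  have hfin : (familySEdges Q).Finite := by
    have hSfin : S.Finite := by
      rw [hS]
      exact (Set.finite_singleton c).insert b |>.insert a
    apply Set.Finite.subset (Set.Finite.image2 (fun u v => s(u, v)) hSfin hSfin)
    rintro e ⟨-, hv⟩
    induction e with
    | _ u v =>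
      exact ⟨u, hv u (by simp), v, hv v (by simp), rfl⟩
  have hlt : (familySEdges P).ncard < (familySEdges Q).ncard := by
    apply Set.ncard_lt_ncard _ hfin
    rw [Set.ssubset_iff_of_subset hsub]
    exact ⟨s(a, b), habQ, habP⟩
  exact absurd (hmax Q hQID hQone) (by omega)
lemma helper_vert_mem {V : Type*} {G : SimpleGraph V} {u v : V} {p : G.Walk u v}
    {e : Sym2 V} (he : e ∈ p.edges) {x : V} (hx : x ∈ e) : x ∈ p.support := by
  induction e with
  | _ s t =>
    rcases Sym2.mem_iff.1 hx with rfl | rfl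
    · exact p.fst_mem_support_of_mem_edges he
    · exact p.snd_mem_support_of_mem_edges he

lemma helper_sym2 {V : Type*} {G : SimpleGraph V} {w1 w2 a b : V} {p : G.Walk w1 w2}
    {e : Sym2 V} (he : e ∈ p.edges) (hmem : ∀ x ∈ e, x = a ∨ x = b) : e = s(a, b) := by
  induction e with
  | _ u v =>
    have hadj : G.Adj u v := p.adj_of_mem_edges he
    rcases hmem u (by rw [Sym2.mem_iff]; left; rfl) with rfl | rfl <;>
      rcases hmem v (by rw [Sym2.mem_iff]; right; rfl) with rfl | rfl
    · exact absurd rfl hadj.ne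
    · rfl
    · exact (Sym2.eq_swap)
    · exact absurd rfl hadj.ne

lemma helper_orient {V : Type*} {G : SimpleGraph V} {u v c b : V}
    (w : G.Walk u v) (hw : w.IsPath) (h : (u = c ∧ v = b) ∨ (u = b ∧ v = c)) :
    ∃ p : G.Walk c b, p.IsPath ∧ (∀ x, x ∈ p.support ↔ x ∈ w.support) ∧
      (∀ e, e ∈ p.edges ↔ e ∈ w.edges) := by
  rcases h with ⟨h1, h2⟩ | ⟨h1, h2⟩
  · exact ⟨w.copy h1 h2, (w.isPath_copy h1 h2).2 hw,
      fun x => by rw [Walk.support_copy], fun e => by rw [Walk.edges_copy]⟩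
  · refine ⟨(w.copy h1 h2).reverse, ((w.isPath_copy h1 h2).2 hw).reverse, ?_, ?_⟩
    · intro x
      rw [Walk.support_reverse, List.mem_reverse, Walk.support_copy]
    · intro e
      rw [Walk.edges_reverse, List.mem_reverse, Walk.edges_copy]

lemma helper_step {V : Type*} {G : SimpleGraph V} {S : Set V} {a b c : V}
    (hab : a ≠ b) (hac : a ≠ c) (hbc : b ≠ c) (hS : S = {a, b, c})
    {t : ℕ} (P : Fin t → SteinerPath G S)
    (hP : IDFamily G S P)
    (hone : ∀ i, ∃! s, s ∈ S ∧ (P i).Internal s)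
    (hmax : ∀ Q : Fin t → SteinerPath G S,
      IDFamily G S Q →
      (∀ i, ∃! s, s ∈ S ∧ (Q i).Internal s) →
      (familySEdges Q).ncard ≤ (familySEdges P).ncard)
    (hadj : G.Adj a b)
    (hnab : ∀ i, s(a, b) ∉ (P i).walk.edges)
    (k : Fin t)
    (hcase : (P k).Internal a ∨ ((P k).Internal c ∧ s(c, b) ∉ (P k).walk.edges)) :
    False := by
  classical
  have haS : a ∈ S := by rw [hS]; left; rfl
  have hbS : b ∈ S := by rw [hS]; right; left; rfl
  have hcS : c ∈ S := by rw [hS]; right; right; rfl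
  obtain ⟨w0, hw0, hwuniq⟩ := hone k
  -- a vertex of S that is not internal is an endpoint
  have hend : ∀ s ∈ S, ¬ (P k).Internal s → s = (P k).first ∨ s = (P k).last := by
    intro s hsS hint
    by_contra h
    push_neg at h
    exact hint ⟨(P k).contains s hsS, h.1, h.2⟩
  rcases hcase with hintA | ⟨hintC, hscb⟩
  · -- internal vertex is a; endpoints are b and c
    have hwa : w0 = a := by
      have h1 := hwuniq a ⟨haS, hintA⟩
      exact h1.symm ▸ rfl
    have hbend : b = (P k).first ∨ b = (P k).last := by
      apply hend b hbS
      intro hint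
      have h2 := hwuniq b ⟨hbS, hint⟩
      have h1 := hwuniq a ⟨haS, hintA⟩
      exact hab (h1.trans h2.symm)
    have hcend : c = (P k).first ∨ c = (P k).last := by
      apply hend c hcS
      intro hint
      have h2 := hwuniq c ⟨hcS, hint⟩
      have h1 := hwuniq a ⟨haS, hintA⟩
      exact hac (h1.trans h2.symm)
    have horient : ((P k).first = c ∧ (P k).last = b) ∨
        ((P k).first = b ∧ (P k).last = c) := by
      rcases hbend with hb | hb <;> rcases hcend with hc | hc
      · exact absurd (hb.trans hc.symm) hbc
      · exact Or.inr ⟨hb.symm, hc.symm⟩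
      · exact Or.inl ⟨hc.symm, hb.symm⟩
      · exact absurd (hb.trans hc.symm) hbc
    obtain ⟨p, hp, hpsup, hpedge⟩ := helper_orient (P k).walk (P k).isPath horient
    have ha' : a ∈ p.support := (hpsup a).2 ((P k).contains a haS)
    set q : G.Walk c a := p.takeUntil a ha' with hq'
    refine helper_replace hab hac hbc hS P hP hone hmax k hadj hnab q
      (hp.takeUntil ha') ?_ ?_ ?_ ?_
    · -- b ∉ q.support
      intro hbq
      have hbd : b ∈ (p.dropUntil a ha').support := (p.dropUntil a ha').end_mem_support
      exact hab (helper_takeDrop hp ha' hbq hbd).symm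
    · intro v hv
      exact (hpsup v).1 (p.support_takeUntil_subset ha' hv)
    · intro e he
      exact (hpedge e).1 (p.edges_takeUntil_subset ha' he)
    · intro e he hv
      have hep : e ∈ p.edges := (hpedge e).2 he
      rw [← p.take_spec ha', Walk.edges_append, List.mem_append] at hep
      rcases hep with hep | hep
      · exact hep
      · exfalso
        have hmem : ∀ x ∈ e, x = a ∨ x = b := by
          intro x hx
          have hxd : x ∈ (p.dropUntil a ha').support := helper_vert_mem hep hx
          have hxS := hv x hx
          rw [hS] at hxS
          rcases hxS with rfl | rfl | rfl
          · exact Or.inl rfl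
          · exact Or.inr rfl
          · exfalso
            have hxt : x ∈ (p.takeUntil a ha').support :=
              (p.takeUntil a ha').start_mem_support
            exact hac (helper_takeDrop hp ha' hxt hxd).symm
        exact hnab k (helper_sym2 hep hmem ▸ he)
  · -- internal vertex is c; endpoints are a and b
    have haend : a = (P k).first ∨ a = (P k).last := by
      apply hend a haS
      intro hint
      have h2 := hwuniq a ⟨haS, hint⟩
      have h1 := hwuniq c ⟨hcS, hintC⟩
      exact hac (h2.trans h1.symm)
    have hbend : b = (P k).first ∨ b = (P k).last := by
      apply hend b hbS
      intro hint
      have h2 := hwuniq b ⟨hbS, hint⟩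
      have h1 := hwuniq c ⟨hcS, hintC⟩
      exact hbc (h2.trans h1.symm)
    have horient : ((P k).first = a ∧ (P k).last = b) ∨
        ((P k).first = b ∧ (P k).last = a) := by
      rcases haend with ha | ha <;> rcases hbend with hb | hb
      · exact absurd (ha.trans hb.symm) hab
      · exact Or.inl ⟨ha.symm, hb.symm⟩
      · exact Or.inr ⟨hb.symm, ha.symm⟩
      · exact absurd (ha.trans hb.symm) hab
    obtain ⟨p, hp, hpsup, hpedge⟩ := helper_orient (P k).walk (P k).isPath horient
    have hc' : c ∈ p.support := (hpsup c).2 ((P k).contains c hcS)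
    set q : G.Walk c a := (p.takeUntil c hc').reverse with hq'
    refine helper_replace hab hac hbc hS P hP hone hmax k hadj hnab q
      ((hp.takeUntil hc').reverse) ?_ ?_ ?_ ?_
    · -- b ∉ q.support
      intro hbq
      rw [hq', Walk.support_reverse, List.mem_reverse] at hbq
      have hbd : b ∈ (p.dropUntil c hc').support := (p.dropUntil c hc').end_mem_support
      exact hbc (helper_takeDrop hp hc' hbq hbd)
    · intro v hv
      rw [hq', Walk.support_reverse, List.mem_reverse] at hv
      exact (hpsup v).1 (p.support_takeUntil_subset hc' hv)
    · intro e he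
      rw [hq', Walk.edges_reverse, List.mem_reverse] at he
      exact (hpedge e).1 (p.edges_takeUntil_subset hc' he)
    · intro e he hv
      have hep : e ∈ p.edges := (hpedge e).2 he
      rw [← p.take_spec hc', Walk.edges_append, List.mem_append] at hep
      rcases hep with hep | hep
      · rw [hq', Walk.edges_reverse, List.mem_reverse]
        exact hep
      · exfalso
        have hmem : ∀ x ∈ e, x = c ∨ x = b := by
          intro x hx
          have hxd : x ∈ (p.dropUntil c hc').support := helper_vert_mem hep hx
          have hxS := hv x hx
          rw [hS] at hxS
          rcases hxS with rfl | rfl | rfl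
          · exfalso
            have hxt : x ∈ (p.takeUntil c hc').support :=
              (p.takeUntil c hc').start_mem_support
            exact hac (helper_takeDrop hp hc' hxt hxd)
          · exact Or.inr rfl
          · exact Or.inl rfl
        exact hscb (helper_sym2 hep hmem ▸ he)
lemma helper_main {V : Type*} {G : SimpleGraph V} {S : Set V} {a b c : V}
    (hab : a ≠ b) (hac : a ≠ c) (hbc : b ≠ c) (hS : S = {a, b, c})
    {t : ℕ} (ht : 2 ≤ t) (P : Fin t → SteinerPath G S)
    (hP : IDFamily G S P)
    (hone : ∀ i, ∃! s, s ∈ S ∧ (P i).Internal s)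
    (hmax : ∀ Q : Fin t → SteinerPath G S,
      IDFamily G S Q →
      (∀ i, ∃! s, s ∈ S ∧ (Q i).Internal s) →
      (familySEdges Q).ncard ≤ (familySEdges P).ncard)
    (hadj : G.Adj a b) :
    ∃ i, s(a, b) ∈ (P i).walk.edges := by
  classical
  by_contra hcon
  push_neg at hcon
  by_cases h1 : ∃ k, (P k).Internal a
  · obtain ⟨k, hk⟩ := h1
    exact helper_step hab hac hbc hS P hP hone hmax hadj hcon k (Or.inl hk)
  by_cases h2 : ∃ k, (P k).Internal b
  · obtain ⟨k, hk⟩ := h2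
    have hS' : S = {b, a, c} := by
      rw [hS]; ext v
      simp only [Set.mem_insert_iff, Set.mem_singleton_iff]
      tauto
    have hnba : ∀ i, s(b, a) ∉ (P i).walk.edges := by
      intro i
      rw [Sym2.eq_swap]
      exact hcon i
    exact helper_step (Ne.symm hab) hbc hac hS' P hP hone hmax hadj.symm hnba k (Or.inl hk)
  push_neg at h1 h2
  have hintC : ∀ k, (P k).Internal c := by
    intro k
    obtain ⟨w, ⟨hwS, hwint⟩, -⟩ := hone k
    rw [hS] at hwS
    rcases hwS with rfl | rfl | rfl
    · exact absurd hwint (h1 k)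
    · exact absurd hwint (h2 k)
    · exact hwint
  have hi0 : (0 : ℕ) < t := by omega
  have hi1 : (1 : ℕ) < t := by omega
  set i0 : Fin t := ⟨0, hi0⟩ with hi0'
  set i1 : Fin t := ⟨1, hi1⟩ with hi1'
  have hne : i0 ≠ i1 := by
    intro h'
    have : (0 : ℕ) = 1 := congrArg Fin.val h'
    omega
  by_cases hcb : s(c, b) ∈ (P i0).walk.edges
  · have hnot : s(c, b) ∉ (P i1).walk.edges := (hP i0 i1 hne).2 _ hcb
    exact helper_step hab hac hbc hS P hP hone hmax hadj hcon i1 (Or.inr ⟨hintC i1, hnot⟩)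
  · exact helper_step hab hac hbc hS P hP hone hmax hadj hcon i0 (Or.inr ⟨hintC i0, hcb⟩)

/-- Claim 1: for a family `𝒯` of internally disjoint `{x,y,z}`-paths, each with exactly
one vertex of `{x,y,z}` internal, maximizing `|E(𝒯) ∩ E(G[{x,y,z}])|`, every edge of
the induced subgraph `G[{x,y,z}]` belongs to `E(𝒯)`. -/
theorem stmt19 {V : Type*} (G : SimpleGraph V)
    (x y z : V) (hxy : x ≠ y) (hxz : x ≠ z) (hyz : y ≠ z)
    (t : ℕ) (ht : 2 ≤ t)
    (P : Fin t → SteinerPath G {x, y, z})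
    (hP : IDFamily G {x, y, z} P)
    (hone : ∀ i, ∃! s, s ∈ ({x, y, z} : Set V) ∧ (P i).Internal s)
    (hmax : ∀ Q : Fin t → SteinerPath G {x, y, z},
      IDFamily G {x, y, z} Q →
      (∀ i, ∃! s, s ∈ ({x, y, z} : Set V) ∧ (Q i).Internal s) →
      (familySEdges Q).ncard ≤ (familySEdges P).ncard) :
    ∀ a b : V, G.Adj a b → a ∈ ({x, y, z} : Set V) → b ∈ ({x, y, z} : Set V) →
      ∃ i, s(a, b) ∈ (P i).walk.edges := by
  intro a b hadj ha hb
  simp only [Set.mem_insert_iff, Set.mem_singleton_iff] at ha hb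
  rcases ha with rfl | rfl | rfl <;> rcases hb with rfl | rfl | rfl
  · exact absurd rfl hadj.ne
  · exact helper_main hxy hxz hyz rfl ht P hP hone hmax hadj
  · exact helper_main hxz hxy hyz.symm
      (by ext v; simp only [Set.mem_insert_iff, Set.mem_singleton_iff]; tauto)
      ht P hP hone hmax hadj
  · exact helper_main hxy.symm hyz hxz
      (by ext v; simp only [Set.mem_insert_iff, Set.mem_singleton_iff]; tauto)
      ht P hP hone hmax hadj
  · exact absurd rfl hadj.ne
  · exact helper_main hyz hxy.symm hxz.symm
      (by ext v; simp only [Set.mem_insert_iff, Set.mem_singleton_iff]; tauto)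
      ht P hP hone hmax hadj
  · exact helper_main hxz.symm hyz.symm hxy
      (by ext v; simp only [Set.mem_insert_iff, Set.mem_singleton_iff]; tauto)
      ht P hP hone hmax hadj
  · exact helper_main hyz.symm hxz.symm hxy.symm
      (by ext v; simp only [Set.mem_insert_iff, Set.mem_singleton_iff]; tauto)
      ht P hP hone hmax hadj
  · exact absurd rfl hadj.ne
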